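/- Every basic word of ω is a reduced word of ω; i.e., every element of Basic(ω) represents ω and has length l(ω). -/

import Mathlib

/-- The adjacent transposition `sᵢ = (i, i+1)` as a permutation of `ℕ`. -/
def sGen (i : ℕ) : Equiv.Perm ℕ := Equiv.swap i (i + 1)

/-- The permutation represented by a word. -/
def toPerm (w : List ℕ) : Equiv.Perm ℕ := (w.map sGen).prod

/-- A word is reduced (of minimal length among words representing the same permutation). -/
def IsReducedWord (w : List ℕ) : Prop := ∀ v : List ℕ, toPerm v = toPerm w → w.length ≤ v.length

/-- `w` is a reduced word for the permutation `ω`. -/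
def IsReducedWordOf (w : List ℕ) (ω : Equiv.Perm ℕ) : Prop :=
  toPerm w = ω ∧ ∀ v : List ℕ, toPerm v = ω → w.length ≤ v.length

/-- The relation `<₁`: `β` is obtained from `α` by swapping two adjacent letters
`x, y` with `y ≥ x + 2` (the smaller letter moves right). -/
def Rel1 (α β : List ℕ) : Prop :=
  ∃ (p q : List ℕ) (x y : ℕ), x + 2 ≤ y ∧
    α = p ++ x :: y :: q ∧ β = p ++ y :: x :: q

/-- Lexicographic order (non-strict) on words. -/
def LexLe (α β : List ℕ) : Prop := α = β ∨ List.Lex (· < ·) α β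

/-- A tower word: a nonempty increasing run of consecutive integers. -/
def IsTowerWord (a : List ℕ) : Prop := a ≠ [] ∧ a.Chain' (fun x y => y = x + 1)

/-- First letter of a tower word. -/
def inn (a : List ℕ) : ℕ := a.headI

/-- Last letter of a tower word. -/
def fin' (a : List ℕ) : ℕ := a.getLastD 0

/-- `L` is the tower decomposition of `w`: a factorization into maximal tower words. -/
def IsTowerDecomp (w : List ℕ) (L : List (List ℕ)) : Prop :=
  L.flatten = w ∧ (∀ a ∈ L, IsTowerWord a) ∧
    L.Chain' (fun a b => inn b ≠ fin' a + 1)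

/-- The relation `<₂`: a directed long-braid move of a tower word past its left neighbour. -/
def Rel2 (α β : List ℕ) : Prop :=
  ∃ (A B : List (List ℕ)) (a b b1 b2 : List ℕ),
    IsTowerDecomp α (A ++ a :: b :: B) ∧
    inn a ≤ inn b ∧ inn b < fin' b ∧ fin' b < fin' a ∧
    IsTowerWord b1 ∧ (b2 = [] ∨ IsTowerWord b2) ∧ b1 ++ b2 = b ∧
    β = A.flatten ++ (b1.map (· + 1)) ++ a ++ b2 ++ B.flatten

/-- The directed-braid order: reflexive-transitive closure of `<₁ ∪ <₂`. -/
def DBraid : List ℕ → List ℕ → Prop :=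
  Relation.ReflTransGen (fun α β => Rel1 α β ∨ Rel2 α β)

/-- The natural word of `ω`: the reduced word whose tower decomposition has
strictly decreasing initial letters. -/
def IsNaturalWordOf (η : List ℕ) (ω : Equiv.Perm ℕ) : Prop :=
  IsReducedWordOf η ω ∧ ∃ L, IsTowerDecomp η L ∧ L.Chain' (fun a b => inn b < inn a)

/-- A natural basic word of `ω`: a reduced word whose tower decomposition satisfies
`fin(aᵢ) > in(aᵢ₊₁)` for all `i`. -/
def IsNaturalBasicOf (β : List ℕ) (ω : Equiv.Perm ℕ) : Prop :=
  IsReducedWordOf β ω ∧ ∃ L, IsTowerDecomp β L ∧ L.Chain' (fun a b => inn b < fin' a)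

/-- One step of the track of a letter `b` through a tower word `a`. -/
def trackStep (a : List ℕ) (b : ℕ) : Option ℕ :=
  if inn a < b ∧ b ≤ fin' a then some (b - 1)
  else if b + 2 ≤ inn a ∨ fin' a + 2 ≤ b then some b
  else none

/-- The track sequence of `b` through a list of tower words. -/
def trackSeq : ℕ → List (List ℕ) → List ℕ
  | b, [] => [b]
  | b, a :: rest =>
    match trackStep a b with
    | none => [b]
    | some b' => b :: trackSeq b' rest

/-- The tower decomposition of a word, as a function. -/
def towerDecomp : List ℕ → List (List ℕ)
  | [] => []
  | x :: xs =>
    match towerDecomp xs with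
    | [] => [[x]]
    | t :: ts => if t.headI = x + 1 then (x :: t) :: ts else [x] :: t :: ts

open Classical in
/-- The set of passage words of a single letter `b` through a word α. -/
noncomputable def passOne (b : ℕ) (α : List ℕ) : Set (List ℕ) :=
  if IsReducedWord (b :: α) then
    { w | ∃ i < (trackSeq b (towerDecomp α)).length,
        w = ((towerDecomp α).take i).flatten ++
          (trackSeq b (towerDecomp α)).getD i 0 :: ((towerDecomp α).drop i).flatten }
  else ∅

/-- Passage words of a word through a word, letter by letter from the right
(first argument is the word β reversed). -/
def passAux : List ℕ → List ℕ → Set (List ℕ)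
  | [], α => {α}
  | b :: rest, α => ⋃ α' ∈ passOne b α, passAux rest α'

/-- The set of passage words of β through α. -/
def passWords (β α : List ℕ) : Set (List ℕ) := passAux β.reverse α

/-- `[B, A]`: all passage words of elements of B through elements of A. -/
def bracket (B A : Set (List ℕ)) : Set (List ℕ) :=
  ⋃ β ∈ B, ⋃ α ∈ A, passWords β α

/-- The set of basic words obtained from a word η with tower decomposition
η₁ … η_k, namely `[[…[[{η₁},{η₂}],{η₃}],…],{η_k}]`. -/
def BasicOf (η : List ℕ) : Set (List ℕ) :=
  match towerDecomp η with
  | [] => {([] : List ℕ)}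
  | t :: ts => ts.foldl (fun S a => bracket S {a}) {t}


section Aux

lemma toPerm_cons' (b : ℕ) (w : List ℕ) : toPerm (b :: w) = sGen b * toPerm w := by
  simp [toPerm]

lemma toPerm_append' (u v : List ℕ) : toPerm (u ++ v) = toPerm u * toPerm v := by
  simp [toPerm]

lemma sGen_comm {a b : ℕ} (h : a + 2 ≤ b) : sGen a * sGen b = sGen b * sGen a := by
  unfold sGen
  ext x
  simp only [Equiv.Perm.mul_apply, Equiv.swap_apply_def]
  split_ifs <;> omega

lemma sGen_braid (a : ℕ) :
    sGen a * sGen (a+1) * sGen a = sGen (a+1) * sGen a * sGen (a+1) := by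
  unfold sGen
  have h1 : Equiv.swap a (a+1) * Equiv.swap (a+1) (a+1+1) * Equiv.swap a (a+1)
      = Equiv.swap a (a+2) := by
    rw [Equiv.swap_comm a (a+1), Equiv.swap_comm (a+1) (a+1+1)]
    exact Equiv.swap_mul_swap_mul_swap (x := a+2) (y := a+1) (z := a) (by omega) (by omega)
  have h2 : Equiv.swap (a+1) (a+1+1) * Equiv.swap a (a+1) * Equiv.swap (a+1) (a+1+1)
      = Equiv.swap (a+2) a :=
    Equiv.swap_mul_swap_mul_swap (x := a) (y := a+1) (z := a+2) (by omega) (by omega)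
  rw [h1, h2, Equiv.swap_comm]

lemma toPerm_commute (b : ℕ) (w : List ℕ) (h : ∀ j ∈ w, b + 2 ≤ j ∨ j + 2 ≤ b) :
    toPerm (b :: w) = toPerm (w ++ [b]) := by
  induction w with
  | nil => rfl
  | cons x xs ih =>
    have hc : sGen b * sGen x = sGen x * sGen b := by
      rcases h x (by simp) with h' | h'
      · exact sGen_comm h'
      · exact (sGen_comm h').symm
    have ih' := ih (fun j hj => h j (by simp [hj]))
    calc toPerm (b :: x :: xs) = sGen b * (sGen x * toPerm xs) := by
          rw [toPerm_cons', toPerm_cons']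
      _ = sGen x * (sGen b * toPerm xs) := by rw [← mul_assoc, hc, mul_assoc]
      _ = sGen x * toPerm (b :: xs) := by rw [toPerm_cons']
      _ = sGen x * toPerm (xs ++ [b]) := by rw [ih']
      _ = toPerm ((x :: xs) ++ [b]) := by rw [List.cons_append, toPerm_cons']

lemma getLastD_cons'' (a : ℕ) (l : List ℕ) (d : ℕ) : (a :: l).getLastD d = l.getLastD a := by
  cases l <;> simp [List.getLastD]

lemma fin'_cons (x y : ℕ) (t : List ℕ) : fin' (x :: y :: t) = fin' (y :: t) := by
  unfold fin'
  rw [getLastD_cons'', getLastD_cons'', getLastD_cons'']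

lemma chain_ge (a : List ℕ) (ha : a.Chain' (fun x y => y = x + 1)) :
    ∀ j ∈ a, a.headI ≤ j := by
  induction a with
  | nil => simp
  | cons x xs ih =>
    intro j hj
    rcases List.mem_cons.mp hj with rfl | hj
    · simp
    · cases xs with
      | nil => cases hj
      | cons y ys =>
        have hrel : y = x + 1 := (List.isChain_cons_cons.mp ha).1
        have h2 := ih (List.isChain_cons_cons.mp ha).2 j hj
        simp only [List.headI] at h2 ⊢
        omega

lemma chain_le (a : List ℕ) (ha : a.Chain' (fun x y => y = x + 1)) :
    ∀ j ∈ a, j ≤ fin' a := by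
  induction a with
  | nil => simp
  | cons x xs ih =>
    intro j hj
    cases xs with
    | nil =>
      simp at hj
      simp [hj, fin']
    | cons y ys =>
      have hrel : y = x + 1 := (List.isChain_cons_cons.mp ha).1
      have hch : (y :: ys).Chain' (fun x y => y = x + 1) := (List.isChain_cons_cons.mp ha).2
      rw [fin'_cons]
      rcases List.mem_cons.mp hj with rfl | hj
      · have := ih hch y (by simp)
        omega
      · exact ih hch j hj

lemma tower_pass_lt (a : List ℕ) (b : ℕ) (ha : a.Chain' (fun x y => y = x + 1))
    (h1 : inn a < b) (h2 : b ≤ fin' a) :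
    toPerm (b :: a) = toPerm (a ++ [b - 1]) := by
  induction a generalizing b with
  | nil => simp [inn, fin'] at h1 h2; omega
  | cons x xs ih =>
    have hx : inn (x :: xs) = x := rfl
    rw [hx] at h1
    cases xs with
    | nil => simp [fin'] at h2; omega
    | cons y ys =>
      have hrel : y = x + 1 := (List.isChain_cons_cons.mp ha).1
      have hch : (y :: ys).Chain' (fun x y => y = x + 1) := (List.isChain_cons_cons.mp ha).2
      by_cases hb : b = x + 1
      · subst hb
        subst hrel
        have hys : ∀ j ∈ ys, x + 2 ≤ j := by
          intro j hj
          cases ys with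
          | nil => cases hj
          | cons z zs =>
            have hz : z = (x + 1) + 1 := (List.isChain_cons_cons.mp hch).1
            have := chain_ge (z :: zs) (List.isChain_cons_cons.mp hch).2 j hj
            simp only [List.headI] at this
            omega
        have hcomm : toPerm (x :: ys) = toPerm (ys ++ [x]) :=
          toPerm_commute x ys (fun j hj => Or.inl (hys j hj))
        have hsub : x + 1 - 1 = x := by omega
        rw [hsub]
        calc toPerm ((x+1) :: x :: (x+1) :: ys)
            = sGen (x+1) * sGen x * sGen (x+1) * toPerm ys := by
              rw [toPerm_cons', toPerm_cons', toPerm_cons']; group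
          _ = sGen x * sGen (x+1) * sGen x * toPerm ys := by rw [← sGen_braid]
          _ = sGen x * sGen (x+1) * toPerm (x :: ys) := by rw [toPerm_cons']; group
          _ = sGen x * sGen (x+1) * toPerm (ys ++ [x]) := by rw [hcomm]
          _ = toPerm ((x :: (x+1) :: ys) ++ [x]) := by
              rw [List.cons_append, List.cons_append, toPerm_cons', toPerm_cons',
                toPerm_append']; group
      · have hx2 : x + 2 ≤ b := by omega
        have h1' : inn (y :: ys) < b := by
          have : inn (y :: ys) = y := rfl
          omega
        have h2' : b ≤ fin' (y :: ys) := by rw [← fin'_cons x]; exact h2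
        have ihr := ih b hch h1' h2'
        have step : toPerm (b :: x :: y :: ys) = sGen x * toPerm (b :: y :: ys) := by
          rw [toPerm_cons' b, toPerm_cons' x, ← mul_assoc, (sGen_comm hx2).symm,
            mul_assoc, ← toPerm_cons' b]
        rw [step, ihr]
        simp [toPerm_cons', toPerm_append', mul_assoc]

lemma trackStep_perm {a : List ℕ} {b b' : ℕ} (ha : IsTowerWord a)
    (h : trackStep a b = some b') : toPerm (b :: a) = toPerm (a ++ [b']) := by
  unfold trackStep at h
  split_ifs at h with h1 h2
  · obtain rfl : b - 1 = b' := by injection h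
    exact tower_pass_lt a b ha.2 h1.1 h1.2
  · obtain rfl : b = b' := by injection h
    apply toPerm_commute
    intro j hj
    have hge := chain_ge a ha.2 j hj
    have hle := chain_le a ha.2 j hj
    have hinn : inn a = a.headI := rfl
    rcases h2 with h2 | h2
    · left; omega
    · right; omega

lemma trackStep_perm' {a : List ℕ} {b b' : ℕ} (ha : IsTowerWord a)
    (h : trackStep a b = some b') (w : List ℕ) :
    toPerm (b :: (a ++ w)) = toPerm (a ++ b' :: w) := by
  have := trackStep_perm ha h
  calc toPerm (b :: (a ++ w)) = toPerm ((b :: a) ++ w) := by rw [List.cons_append]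
    _ = toPerm (b :: a) * toPerm w := toPerm_append' _ _
    _ = toPerm (a ++ [b']) * toPerm w := by rw [this]
    _ = toPerm ((a ++ [b']) ++ w) := (toPerm_append' _ _).symm
    _ = toPerm (a ++ b' :: w) := by rw [List.append_assoc, List.singleton_append]

lemma trackSeq_spec (L : List (List ℕ)) (b : ℕ) (hL : ∀ a ∈ L, IsTowerWord a) :
    ∀ i, i < (trackSeq b L).length →
      toPerm ((L.take i).flatten ++ ((trackSeq b L).getD i 0) :: (L.drop i).flatten)
        = toPerm (b :: L.flatten) := by
  induction L generalizing b with
  | nil =>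
    intro i hi
    simp only [trackSeq, List.length_singleton] at hi
    interval_cases i
    simp [trackSeq]
  | cons a rest ih =>
    intro i hi
    cases h : trackStep a b with
    | none =>
      simp only [trackSeq, h, List.length_singleton] at hi
      interval_cases i
      simp [trackSeq, h]
    | some b' =>
      cases i with
      | zero => simp [trackSeq, h]
      | succ j =>
        simp only [trackSeq, h, List.length_cons, Nat.succ_lt_succ_iff] at hi
        have IH := ih b' (fun x hx => hL x (List.mem_cons_of_mem _ hx)) j hi
        have hgetD : (trackSeq b (a :: rest)).getD (j+1) 0 = (trackSeq b' rest).getD j 0 := by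
          simp [trackSeq, h]
        rw [hgetD]
        have ht : ((a :: rest).take (j+1)) = a :: rest.take j := rfl
        have hd : ((a :: rest).drop (j+1)) = rest.drop j := rfl
        rw [ht, hd, List.flatten_cons, List.flatten_cons, List.append_assoc,
          toPerm_append', IH, ← toPerm_append']
        exact (trackStep_perm' (hL a (by simp)) h rest.flatten).symm

lemma towerDecomp_flatten (w : List ℕ) : (towerDecomp w).flatten = w := by
  induction w with
  | nil => rfl
  | cons x xs ih =>
    unfold towerDecomp
    cases h : towerDecomp xs with
    | nil =>
      rw [h] at ih
      simp at ih
      simp [ih]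
    | cons t ts =>
      rw [h] at ih
      simp only [List.flatten_cons] at ih
      by_cases ht : t.headI = x + 1 <;> simp [ht, ih]

lemma towerDecomp_tower (w : List ℕ) : ∀ a ∈ towerDecomp w, IsTowerWord a := by
  induction w with
  | nil => simp [towerDecomp]
  | cons x xs ih =>
    unfold towerDecomp
    cases h : towerDecomp xs with
    | nil =>
      intro a ha
      simp at ha
      subst ha
      exact ⟨by simp, List.isChain_singleton x⟩
    | cons t ts =>
      rw [h] at ih
      by_cases ht : t.headI = x + 1
      · simp only [ht, if_pos rfl]
        intro a ha
        rcases List.mem_cons.mp ha with rfl | ha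
        · refine ⟨by simp, ?_⟩
          have htw := ih t (by simp)
          simp only [List.Chain', List.isChain_cons]
          refine ⟨?_, htw.2⟩
          intro y hy
          cases t with
          | nil => exact absurd rfl htw.1
          | cons z zs =>
            simp only [List.head?_cons, Option.mem_def, Option.some.injEq] at hy
            subst hy
            simpa using ht
        · exact ih a (List.mem_cons_of_mem _ ha)
      · simp only [if_neg ht]
        intro a ha
        rcases List.mem_cons.mp ha with rfl | ha
        · exact ⟨by simp, List.isChain_singleton x⟩
        · exact ih a ha

lemma passOne_spec {b : ℕ} {α w : List ℕ} (h : w ∈ passOne b α) :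
    toPerm w = toPerm (b :: α) ∧ w.length = α.length + 1 := by
  unfold passOne at h
  split_ifs at h with hr
  · obtain ⟨i, hi, rfl⟩ := h
    constructor
    · have := trackSeq_spec (towerDecomp α) b (towerDecomp_tower α) i hi
      rwa [towerDecomp_flatten] at this
    · have hlen : (((towerDecomp α).take i).flatten ++ ((towerDecomp α).drop i).flatten).length
          = α.length := by
        rw [← List.flatten_append, List.take_append_drop, towerDecomp_flatten]
      simp only [List.length_append, List.length_cons] at hlen ⊢
      omega
  · exact absurd h (Set.notMem_empty w)

lemma passAux_spec : ∀ (r : List ℕ) (α w : List ℕ), w ∈ passAux r α →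
    toPerm w = toPerm (r.reverse ++ α) ∧ w.length = r.length + α.length := by
  intro r
  induction r with
  | nil =>
    intro α w h
    simp only [passAux, Set.mem_singleton_iff] at h
    subst h
    simp
  | cons b rest ih =>
    intro α w h
    simp only [passAux, Set.mem_iUnion] at h
    obtain ⟨α', hα', hw⟩ := h
    obtain ⟨h1, h2⟩ := passOne_spec hα'
    obtain ⟨h3, h4⟩ := ih α' w hw
    constructor
    · rw [h3, toPerm_append', h1, List.reverse_cons, List.append_assoc,
        List.singleton_append, toPerm_append']
    · rw [h4, h2]
      simp
      omega
    
lemma passWords_spec {β α w : List ℕ} (h : w ∈ passWords β α) :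
    toPerm w = toPerm (β ++ α) ∧ w.length = β.length + α.length := by
  have := passAux_spec β.reverse α w h
  rwa [List.reverse_reverse, List.length_reverse] at this

lemma foldl_spec (ts : List (List ℕ)) : ∀ (S : Set (List ℕ)) (π : Equiv.Perm ℕ) (n : ℕ),
    (∀ β ∈ S, toPerm β = π ∧ β.length = n) →
    ∀ w ∈ ts.foldl (fun S a => bracket S {a}) S,
      toPerm w = π * toPerm ts.flatten ∧ w.length = n + ts.flatten.length := by
  induction ts with
  | nil =>
    intro S π n hS w hw
    simp only [List.foldl_nil] at hw
    have := hS w hw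
    simpa [toPerm] using this
  | cons a rest ih =>
    intro S π n hS w hw
    simp only [List.foldl_cons] at hw
    have hS' : ∀ β ∈ bracket S {a}, toPerm β = π * toPerm a ∧ β.length = n + a.length := by
      intro β hβ
      simp only [bracket, Set.mem_iUnion, Set.mem_singleton_iff] at hβ
      obtain ⟨β', hβ', α, rfl, hβw⟩ := hβ
      obtain ⟨e1, e2⟩ := passWords_spec hβw
      obtain ⟨p1, p2⟩ := hS β' hβ'
      rw [e1, toPerm_append', p1, e2, p2]
      exact ⟨rfl, rfl⟩
    obtain ⟨q1, q2⟩ := ih (bracket S {a}) (π * toPerm a) (n + a.length) hS' w hw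
    rw [q1, q2, List.flatten_cons, toPerm_append', List.length_append]
    constructor
    · group
    · omega

end Aux

/-- every basic word of ω is a reduced word of ω. -/
theorem basic_words_reduced (ω : Equiv.Perm ℕ) (η : List ℕ)
    (hη : IsNaturalWordOf η ω) :
    ∀ w ∈ BasicOf η, IsReducedWordOf w ω := by
  intro w hw
  obtain ⟨⟨hperm, hmin⟩, -⟩ := hη
  have key : toPerm w = toPerm η ∧ w.length = η.length := by
    unfold BasicOf at hw
    cases h : towerDecomp η with
    | nil =>
      rw [h] at hw
      simp only [Set.mem_singleton_iff] at hw
      subst hw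
      have hη0 : η = [] := by
        have := towerDecomp_flatten η
        rw [h] at this
        simpa using this.symm
      simp [hη0]
    | cons t ts =>
      rw [h] at hw
      have hηeq : η = t ++ ts.flatten := by
        have := towerDecomp_flatten η
        rw [h, List.flatten_cons] at this
        exact this.symm
      have hstart : ∀ β ∈ ({t} : Set (List ℕ)), toPerm β = toPerm t ∧ β.length = t.length := by
        intro β hβ
        simp only [Set.mem_singleton_iff] at hβ
        subst hβ
        exact ⟨rfl, rfl⟩
      obtain ⟨q1, q2⟩ := foldl_spec ts {t} (toPerm t) t.length hstart w hw
      rw [hηeq, toPerm_append', List.length_append]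
      exact ⟨q1, by omega⟩
  refine ⟨key.1.trans hperm, fun v hv => ?_⟩
  rw [key.2]
  exact hmin v hv
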